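/- Let Φ be a crystallographic root system. Any summable finite subset X ⊆ Φ with no vanishing subsum admits at least p distinct summable subsets of cardinality |X| - p + 1, for any 1 ≤ p ≤ |X|. -/

import Mathlib

open Pointwise

structure RootSys (V : Type*) [NormedAddCommGroup V] [InnerProductSpace ℝ V] where
  Φ : Set V
  finite : Φ.Finite
  nonzero : ∀ α ∈ Φ, α ≠ (0 : V)
  line : ∀ α ∈ Φ, Φ ∩ {x : V | ∃ t : ℝ, x = t • α} = {α, -α}
  reflect : ∀ α ∈ Φ, ∀ β ∈ Φ, β - (2 * (inner ℝ α β : ℝ) / (inner ℝ α α : ℝ)) • α ∈ Φ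

variable {V : Type*} [NormedAddCommGroup V] [InnerProductSpace ℝ V]

/-- `Φ` is crystallographic: `⟨α^∨, β⟩ ∈ ℤ` for all roots `α, β`. -/
def RootSys.IsCrystallographic (R : RootSys V) : Prop :=
  ∀ α ∈ R.Φ, ∀ β ∈ R.Φ, ∃ n : ℤ, 2 * (inner ℝ α β : ℝ) / (inner ℝ α α : ℝ) = (n : ℝ)

/-- A subset `S ⊆ Φ` is closed if it is stable under sums of two elements staying in `Φ`. -/
def RootSys.IsClosedSubset (R : RootSys V) (S : Set V) : Prop :=
  ∀ α ∈ S, ∀ β ∈ S, α + β ∈ R.Φ → α + β ∈ S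

/-- A set of roots is antisymmetric if it never contains both `α` and `-α`. -/
def IsAntisymSet (S : Set V) : Prop := ∀ α ∈ S, -α ∉ S

/-- A `Φ`-poset: an antisymmetric closed subset of `Φ`. -/
def RootSys.IsPoset (R : RootSys V) (S : Set V) : Prop :=
  S ⊆ R.Φ ∧ IsAntisymSet S ∧ R.IsClosedSubset S

/-- Closure: roots that are nonnegative integer combinations (multiset sums) of elements of `T`. -/
def RootSys.clos (R : RootSys V) (T : Set V) : Set V :=
  {γ ∈ R.Φ | ∃ M : Multiset V, (∀ x ∈ M, x ∈ T) ∧ M.sum = γ}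

/-- Nonnegative integer combinations (multiset sums) of elements of `T`. -/
def nncomb (T : Set V) : Set V :=
  {v | ∃ M : Multiset V, (∀ x ∈ M, x ∈ T) ∧ M.sum = v}

/-- A root system equipped with a generic linear functional determining positive roots. -/
structure PosRootSys (V : Type*) [NormedAddCommGroup V] [InnerProductSpace ℝ V]
    extends RootSys V where
  f : V →ₗ[ℝ] ℝ
  generic : ∀ α ∈ Φ, f α ≠ 0

def PosRootSys.Pos (P : PosRootSys V) : Set V := {α ∈ P.Φ | 0 < P.f α}

def PosRootSys.Neg (P : PosRootSys V) : Set V := {α ∈ P.Φ | P.f α < 0}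

/-- The weak order: `R ≼ S` iff `R⁺ ⊇ S⁺` and `R⁻ ⊆ S⁻`. -/
def PosRootSys.wle (P : PosRootSys V) (R S : Set V) : Prop :=
  S ∩ P.Pos ⊆ R ∩ P.Pos ∧ R ∩ P.Neg ⊆ S ∩ P.Neg

/-- `R` is semiclosed if both `R⁺` and `R⁻` are closed. -/
def PosRootSys.SemiClosed (P : PosRootSys V) (S : Set V) : Prop :=
  S ⊆ P.Φ ∧ P.toRootSys.IsClosedSubset (S ∩ P.Pos) ∧
    P.toRootSys.IsClosedSubset (S ∩ P.Neg)

/-- Negative closure deletion. -/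
def PosRootSys.ncd (P : PosRootSys V) (S : Set V) : Set V :=
  S \ {α | α ∈ S ∩ P.Neg ∧ ∃ X : Finset V, ↑X ⊆ S ∩ P.Pos ∧ α + X.sum id ∈ P.Φ \ S}

/-- Positive closure deletion. -/
def PosRootSys.pcd (P : PosRootSys V) (S : Set V) : Set V :=
  S \ {α | α ∈ S ∩ P.Pos ∧ ∃ X : Finset V, ↑X ⊆ S ∩ P.Neg ∧ α + X.sum id ∈ P.Φ \ S}

/-- Meet formula on closed subsets. -/
def PosRootSys.wmeet (P : PosRootSys V) (R S : Set V) : Set V :=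
  P.ncd (P.toRootSys.clos ((R ∪ S) ∩ P.Pos) ∪ ((R ∩ S) ∩ P.Neg))

/-- Join formula on closed subsets. -/
def PosRootSys.wjoin (P : PosRootSys V) (R S : Set V) : Set V :=
  P.pcd (((R ∩ S) ∩ P.Pos) ∪ P.toRootSys.clos ((R ∪ S) ∩ P.Neg))

open InnerProductSpace in
private lemma ipos {x : V} (hx : x ≠ 0) : 0 < ⟪x, x⟫_ℝ := by
  rcases lt_or_eq_of_le (real_inner_self_nonneg (x := x)) with h | h
  · exact h
  · exact absurd (inner_self_eq_zero.mp h.symm) hx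

private lemma RootSys.neg_mem' (R : RootSys V) {α : V} (h : α ∈ R.Φ) : -α ∈ R.Φ := by
  have hl := R.line α h
  have hm : -α ∈ R.Φ ∩ {x : V | ∃ t : ℝ, x = t • α} := by
    rw [hl]; right; rfl
  exact hm.1

private lemma RootSys.eq_or_neg' (R : RootSys V) {α x : V} (hα : α ∈ R.Φ) (hx : x ∈ R.Φ)
    (t : ℝ) (ht : x = t • α) : x = α ∨ x = -α := by
  have hm : x ∈ R.Φ ∩ {y : V | ∃ s : ℝ, y = s • α} := ⟨hx, t, ht⟩
  rw [R.line α hα] at hm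
  simpa using hm

open InnerProductSpace in
private lemma cs_strict {x y : V} (hy : y ≠ 0) (hindep : ∀ t : ℝ, x ≠ t • y) :
    ⟪x, y⟫_ℝ ^ 2 < ⟪x, x⟫_ℝ * ⟪y, y⟫_ℝ := by
  have hy' : ‖y‖ ≠ 0 := norm_ne_zero_iff.mpr hy
  have h1 : |⟪x, y⟫_ℝ| ≤ ‖x‖ * ‖y‖ := abs_real_inner_le_norm x y
  have h2 : |⟪x, y⟫_ℝ| ≠ ‖x‖ * ‖y‖ := by
    intro h
    rcases (abs_eq (by positivity)).mp h with h' | h'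
    · have heq := inner_eq_norm_mul_iff_real.mp h'
      apply hindep (‖y‖⁻¹ * ‖x‖)
      calc x = ‖y‖⁻¹ • (‖y‖ • x) := by rw [inv_smul_smul₀ hy']
        _ = ‖y‖⁻¹ • (‖x‖ • y) := by rw [heq]
        _ = (‖y‖⁻¹ * ‖x‖) • y := by rw [smul_smul]
    · have h'' : ⟪x, -y⟫_ℝ = ‖x‖ * ‖-y‖ := by
        rw [inner_neg_right, norm_neg]; linarith
      have heq := inner_eq_norm_mul_iff_real.mp h''
      rw [norm_neg] at heq
      apply hindep (-(‖y‖⁻¹ * ‖x‖))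
      calc x = ‖y‖⁻¹ • (‖y‖ • x) := by rw [inv_smul_smul₀ hy']
        _ = ‖y‖⁻¹ • (‖x‖ • (-y)) := by rw [heq]
        _ = (-(‖y‖⁻¹ * ‖x‖)) • y := by
              rw [smul_neg, smul_neg, smul_smul, neg_smul]
  have h3 : |⟪x, y⟫_ℝ| < ‖x‖ * ‖y‖ := lt_of_le_of_ne h1 h2
  have h4 := mul_self_lt_mul_self (abs_nonneg _) h3
  rw [abs_mul_abs_self] at h4
  calc ⟪x, y⟫_ℝ ^ 2 = ⟪x, y⟫_ℝ * ⟪x, y⟫_ℝ := by ring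
    _ < (‖x‖ * ‖y‖) * (‖x‖ * ‖y‖) := h4
    _ = ⟪x, x⟫_ℝ * ⟪y, y⟫_ℝ := by
        rw [real_inner_self_eq_norm_mul_norm, real_inner_self_eq_norm_mul_norm]; ring

open InnerProductSpace in
private lemma RootSys.sub_mem' (R : RootSys V) (hcr : R.IsCrystallographic) {α β : V}
    (hα : α ∈ R.Φ) (hβ : β ∈ R.Φ) (hpos : 0 < ⟪α, β⟫_ℝ) (hne : α ≠ β) : α - β ∈ R.Φ := by
  have hα0 := R.nonzero α hα
  have hβ0 := R.nonzero β hβ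
  have ha : 0 < ⟪α, α⟫_ℝ := ipos hα0
  have hb : 0 < ⟪β, β⟫_ℝ := ipos hβ0
  have hnegβ : α ≠ -β := by
    intro h
    rw [h, inner_neg_left] at hpos
    linarith
  have hindep : ∀ t : ℝ, α ≠ t • β := by
    intro t h
    rcases R.eq_or_neg' hβ hα t h with h' | h'
    · exact hne h'
    · exact hnegβ h'
  obtain ⟨m, hm⟩ := hcr β hβ α hα
  obtain ⟨n, hn⟩ := hcr α hα β hβ
  have hcomm : ⟪β, α⟫_ℝ = ⟪α, β⟫_ℝ := real_inner_comm α β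
  have hm' : 2 * ⟪α, β⟫_ℝ = (m : ℝ) * ⟪β, β⟫_ℝ := by
    rw [div_eq_iff hb.ne'] at hm
    rw [← hcomm]; exact hm
  have hn' : 2 * ⟪α, β⟫_ℝ = (n : ℝ) * ⟪α, α⟫_ℝ := by
    rw [div_eq_iff ha.ne'] at hn
    exact hn
  have hmpos : 1 ≤ m := by
    have h0 : 0 < (m : ℝ) := by nlinarith
    exact_mod_cast h0
  have hnpos : 1 ≤ n := by
    have h0 : 0 < (n : ℝ) := by nlinarith
    exact_mod_cast h0
  have hcs : ⟪α, β⟫_ℝ ^ 2 < ⟪α, α⟫_ℝ * ⟪β, β⟫_ℝ := cs_strict hβ0 hindep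
  have hprod : ((m : ℝ) * ⟪β, β⟫_ℝ) * ((n : ℝ) * ⟪α, α⟫_ℝ) = (2 * ⟪α, β⟫_ℝ) * (2 * ⟪α, β⟫_ℝ) := by
    rw [← hm', ← hn']
  have hlt : (m : ℝ) * (n : ℝ) < 4 := by nlinarith [mul_pos ha hb]
  have h4 : m * n < 4 := by exact_mod_cast hlt
  have hcase : m = 1 ∨ n = 1 := by
    by_contra hc
    push_neg at hc
    have hm2 : 2 ≤ m := by omega
    have hn2 : 2 ≤ n := by omega
    nlinarith
  rcases hcase with h1 | h1
  · have hr := R.reflect β hβ α hα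
    rw [hm, h1] at hr
    simpa using hr
  · have hr := R.reflect α hα β hβ
    rw [hn, h1] at hr
    simp only [Int.cast_one, one_smul] at hr
    have := R.neg_mem' hr
    rwa [neg_sub] at this

private lemma msum_nonpos (M : Multiset ℝ) (h : ∀ x ∈ M, x ≤ 0) : M.sum ≤ 0 := by
  induction M using Multiset.induction_on with
  | empty => simp
  | cons a s ih =>
    rw [Multiset.sum_cons]
    have h1 := h a (Multiset.mem_cons_self a s)
    have h2 := ih (fun x hx => h x (Multiset.mem_cons_of_mem hx))
    linarith

open InnerProductSpace in
private lemma inner_msum (x : V) (M : Multiset V) :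
    ⟪x, M.sum⟫_ℝ = (M.map (fun y => ⟪x, y⟫_ℝ)).sum := by
  induction M using Multiset.induction_on with
  | empty => simp
  | cons a s ih => simp [inner_add_right, ih]

open InnerProductSpace in
private lemma key_lemma [DecidableEq V] (R : RootSys V) (hcr : R.IsCrystallographic) :
    ∀ n : ℕ, ∀ M : Multiset V, Multiset.card M ≤ n →
    (∀ x ∈ M, x ∈ R.Φ) → M.sum ∈ R.Φ → (∀ N ≤ M, N ≠ 0 → N.sum ≠ 0) →
    2 ≤ Multiset.card M → ∀ α ∈ M, ∃ δ ∈ M.erase α, M.sum - δ ∈ R.Φ := by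
  intro n
  induction n with
  | zero => intro M hc _ _ _ h2 _ _; omega
  | succ n IH =>
    intro M hcard hmem hsum hnv h2 α hα
    by_contra hbad
    push_neg at hbad
    have hσΦ := hsum
    have hσ0 : M.sum ≠ 0 := R.nonzero _ hσΦ
    have hαΦ := hmem α hα
    have hα0 := R.nonzero α hαΦ
    -- all other elements pair nonpositively with the sum
    have hstep1 : ∀ δ ∈ M.erase α, ⟪M.sum, δ⟫_ℝ ≤ 0 := by
      intro δ hδ
      have hδM : δ ∈ M := Multiset.mem_of_le (Multiset.erase_le α M) hδ
      have hδΦ := hmem δ hδM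
      by_contra hpos
      push_neg at hpos
      have hneq : M.sum ≠ δ := by
        intro h
        have hle := Multiset.erase_le δ M
        have hne : M.erase δ ≠ 0 := by
          have hc1 := Multiset.card_erase_add_one hδM
          intro h0
          rw [h0] at hc1
          simp at hc1
          omega
        apply hnv (M.erase δ) hle hne
        have h3 : δ + (M.erase δ).sum = M.sum := by
          rw [← Multiset.sum_cons, Multiset.cons_erase hδM]
        rw [h] at h3
        exact add_eq_left.mp h3
      exact hbad δ hδ (R.sub_mem' hcr hσΦ hδΦ hpos hneq)
    have hconsα := Multiset.cons_erase hα
    have hsum_eq : M.sum = α + (M.erase α).sum := by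
      rw [← Multiset.sum_cons, hconsα]
    have hsumerase : (M.erase α).sum = M.sum - α := by
      rw [hsum_eq, add_sub_cancel_left]
    have hτ_nonpos : ⟪M.sum, (M.erase α).sum⟫_ℝ ≤ 0 := by
      rw [inner_msum]
      apply msum_nonpos
      intro z hz
      obtain ⟨γ, hγ, rfl⟩ := Multiset.mem_map.mp hz
      exact hstep1 γ hγ
    have hinner_ge : ⟪M.sum, M.sum⟫_ℝ ≤ ⟪M.sum, α⟫_ℝ := by
      have hd : ⟪M.sum, M.sum⟫_ℝ = ⟪M.sum, α⟫_ℝ + ⟪M.sum, (M.erase α).sum⟫_ℝ := by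
        rw [← inner_add_right, ← hsum_eq]
      linarith
    have hs : 0 < ⟪M.sum, M.sum⟫_ℝ := ipos hσ0
    have hσα_pos : 0 < ⟪M.sum, α⟫_ℝ := lt_of_lt_of_le hs hinner_ge
    rcases eq_or_lt_of_le h2 with h2' | h3
    · -- |M| = 2 : the other element δ₀ works, contradiction
      have hc1 : Multiset.card (M.erase α) = 1 := by
        have := Multiset.card_erase_add_one hα
        omega
      obtain ⟨δ₀, hδ₀⟩ := Multiset.card_eq_one.mp hc1
      refine hbad δ₀ (by rw [hδ₀]; exact Multiset.mem_singleton_self δ₀) ?_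
      have hδ₀eq : δ₀ = M.sum - α := by
        rw [← hsumerase, hδ₀, Multiset.sum_singleton]
      rw [hδ₀eq, sub_sub_cancel]
      exact hαΦ
    · -- |M| ≥ 3
      have hσneα : M.sum ≠ α := by
        intro h
        have hne : M.erase α ≠ 0 := by
          have hc1 := Multiset.card_erase_add_one hα
          intro h0
          rw [h0] at hc1
          simp at hc1
          omega
        apply hnv (M.erase α) (Multiset.erase_le α M) hne
        rw [hsumerase, h, sub_self]
      have hσneNegα : M.sum ≠ -α := by
        intro h
        rw [h, inner_neg_left] at hσα_pos
        have := ipos hα0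
        linarith
      have hindep : ∀ t : ℝ, M.sum ≠ t • α := by
        intro t h
        rcases R.eq_or_neg' hαΦ hσΦ t h with h' | h'
        · exact hσneα h'
        · exact hσneNegα h'
      obtain ⟨m, hm⟩ := hcr α hαΦ M.sum hσΦ
      obtain ⟨nn, hn⟩ := hcr M.sum hσΦ α hαΦ
      have ha : 0 < ⟪α, α⟫_ℝ := ipos hα0
      have hm' : 2 * ⟪M.sum, α⟫_ℝ = (m : ℝ) * ⟪α, α⟫_ℝ := by
        rw [div_eq_iff ha.ne'] at hm
        rw [← real_inner_comm M.sum α]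
        exact hm
      have hn' : 2 * ⟪M.sum, α⟫_ℝ = (nn : ℝ) * ⟪M.sum, M.sum⟫_ℝ := by
        rw [div_eq_iff hs.ne'] at hn
        exact hn
      have hm1 : 1 ≤ m := by
        have h0 : 0 < (m : ℝ) := by nlinarith
        exact_mod_cast h0
      have hn2 : 2 ≤ nn := by
        have h0 : 2 ≤ (nn : ℝ) := by nlinarith
        exact_mod_cast h0
      have hcs : ⟪M.sum, α⟫_ℝ ^ 2 < ⟪M.sum, M.sum⟫_ℝ * ⟪α, α⟫_ℝ :=
        cs_strict hα0 hindep
      have hlt : (m : ℝ) * (nn : ℝ) < 4 := by nlinarith [mul_pos hs ha]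
      have h4 : m * nn < 4 := by exact_mod_cast hlt
      have hmeq : m = 1 := by nlinarith
      have hhalf : 2 * ⟪M.sum, α⟫_ℝ = ⟪α, α⟫_ℝ := by
        rw [hm', hmeq]; simp
      -- find γ with ⟪α, γ⟫ < 0
      have hτneg : ⟪α, (M.erase α).sum⟫_ℝ < 0 := by
        rw [hsumerase, inner_sub_right]
        have hcm : ⟪α, M.sum⟫_ℝ = ⟪M.sum, α⟫_ℝ := real_inner_comm M.sum α
        rw [hcm]
        linarith
      obtain ⟨γ, hγmem, hγneg⟩ : ∃ γ ∈ M.erase α, ⟪α, γ⟫_ℝ < 0 := by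
        by_contra hc
        push_neg at hc
        rw [inner_msum] at hτneg
        have hnn : 0 ≤ ((M.erase α).map (fun y => ⟪α, y⟫_ℝ)).sum := by
          apply Multiset.sum_nonneg
          intro z hz
          obtain ⟨γ, hγ, rfl⟩ := Multiset.mem_map.mp hz
          exact hc γ hγ
        linarith
      have hγM : γ ∈ M := Multiset.mem_of_le (Multiset.erase_le α M) hγmem
      have hγΦ := hmem γ hγM
      have hpair : (α ::ₘ {γ}) ≤ M := by
        rw [← hconsα]
        exact Multiset.cons_le_cons α (Multiset.singleton_le.mpr hγmem)
      have hαγ0 : α + γ ≠ 0 := by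
        have hne : (α ::ₘ ({γ} : Multiset V)) ≠ 0 := by simp
        have := hnv (α ::ₘ {γ}) hpair hne
        simpa [Multiset.sum_cons] using this
      have hαγΦ : α + γ ∈ R.Φ := by
        have hp1 : 0 < ⟪α, -γ⟫_ℝ := by rw [inner_neg_right]; linarith
        have hp2 : α ≠ -γ := by
          intro h
          apply hαγ0
          rw [h]; simp
        have := R.sub_mem' hcr hαΦ (R.neg_mem' hγΦ) hp1 hp2
        rwa [sub_neg_eq_add] at this
      -- build M₁ replacing {α, γ} by α + γ
      have hγcons : γ ::ₘ (M.erase α).erase γ = M.erase α := Multiset.cons_erase hγmem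
      have hrest_le : (M.erase α).erase γ ≤ M :=
        le_trans (Multiset.erase_le γ (M.erase α)) (Multiset.erase_le α M)
      have hrest_sum : ((M.erase α).erase γ).sum = M.sum - α - γ := by
        have h1 : (γ ::ₘ (M.erase α).erase γ).sum = M.sum - α := by
          rw [hγcons, hsumerase]
        rw [Multiset.sum_cons] at h1
        have h2' := sub_eq_of_eq_add' h1.symm
        exact h2'.symm
      set M₁ : Multiset V := (α + γ) ::ₘ (M.erase α).erase γ with hM₁
      have hM₁card : Multiset.card M₁ = Multiset.card M - 1 := by
        have e1 := Multiset.card_erase_add_one hα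
        have e2 := Multiset.card_erase_add_one hγmem
        rw [hM₁, Multiset.card_cons]
        omega
      have hM₁mem : ∀ x ∈ M₁, x ∈ R.Φ := by
        intro x hx
        rcases Multiset.mem_cons.mp hx with h | h
        · rw [h]; exact hαγΦ
        · exact hmem x (Multiset.mem_of_le hrest_le h)
      have hM₁sum : M₁.sum = M.sum := by
        rw [hM₁, Multiset.sum_cons, hrest_sum]
        abel
      have hM₁nv : ∀ N ≤ M₁, N ≠ 0 → N.sum ≠ 0 := by
        intro N hN h0
        by_cases hmemN : (α + γ) ∈ N
        · have hNe : N.erase (α + γ) ≤ (M.erase α).erase γ := by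
            have h1 := Multiset.erase_le_erase (α + γ) hN
            rwa [hM₁, Multiset.erase_cons_head] at h1
          have hle2 : (α ::ₘ γ ::ₘ N.erase (α + γ)) ≤ M := by
            rw [← hconsα]
            apply Multiset.cons_le_cons
            rw [← hγcons]
            exact Multiset.cons_le_cons _ hNe
          have hne2 : (α ::ₘ γ ::ₘ N.erase (α + γ)) ≠ 0 := by simp
          have hval := hnv _ hle2 hne2
          have hNs : N.sum = (α ::ₘ γ ::ₘ N.erase (α + γ)).sum := by
            conv_lhs => rw [← Multiset.cons_erase hmemN]
            rw [Multiset.sum_cons, Multiset.sum_cons, Multiset.sum_cons]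
            abel
          rw [hNs]
          exact hval
        · have hle3 : N ≤ (M.erase α).erase γ := by
            have h1 := Multiset.erase_le_erase (α + γ) hN
            rwa [hM₁, Multiset.erase_cons_head, Multiset.erase_of_notMem hmemN] at h1
          exact hnv N (le_trans hle3 hrest_le) h0
      have h2' : 2 ≤ Multiset.card M₁ := by omega
      have hcard' : Multiset.card M₁ ≤ n := by omega
      obtain ⟨δ, hδ, hδΦ⟩ := IH M₁ hcard' hM₁mem (hM₁sum ▸ hσΦ) hM₁nv h2'
        (α + γ) (Multiset.mem_cons_self _ _)
      rw [hM₁, Multiset.erase_cons_head] at hδ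
      refine hbad δ (Multiset.mem_of_le (Multiset.erase_le γ (M.erase α)) hδ) ?_
      rw [hM₁sum] at hδΦ
      exact hδΦ

private lemma sub_multiset_lemma [DecidableEq V] (R : RootSys V) (hcr : R.IsCrystallographic) :
    ∀ n : ℕ, ∀ M : Multiset V, Multiset.card M ≤ n →
    (∀ x ∈ M, x ∈ R.Φ) → M.sum ∈ R.Φ → (∀ N ≤ M, N ≠ 0 → N.sum ≠ 0) →
    ∀ α ∈ M, ∀ k : ℕ, 1 ≤ k → k ≤ Multiset.card M →
    ∃ N : Multiset V, N ≤ M ∧ α ∈ N ∧ Multiset.card N = k ∧ N.sum ∈ R.Φ := by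
  intro n
  induction n with
  | zero => intro M hc _ _ _ α hα k hk1 hk2; omega
  | succ n IH =>
    intro M hcard hmem hsum hnv α hα k hk1 hk2
    rcases eq_or_lt_of_le hk2 with he | hlt
    · exact ⟨M, le_rfl, hα, he.symm, hsum⟩
    · have h2 : 2 ≤ Multiset.card M := by omega
      obtain ⟨δ, hδ, hδΦ⟩ := key_lemma R hcr (n + 1) M hcard hmem hsum hnv h2 α hα
      have hδM : δ ∈ M := Multiset.mem_of_le (Multiset.erase_le α M) hδ
      have hαM' : α ∈ M.erase δ := by
        by_cases h : δ = α
        · rw [← h] at hδ ⊢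
          exact hδ
        · exact (Multiset.mem_erase_of_ne (fun h' => h h'.symm)).mpr hα
      have hsum' : (M.erase δ).sum = M.sum - δ := by
        have hcons := Multiset.cons_erase hδM
        have : M.sum = δ + (M.erase δ).sum := by
          conv_lhs => rw [← hcons]
          rw [Multiset.sum_cons]
        rw [this, add_sub_cancel_left]
      have e1 := Multiset.card_erase_add_one hδM
      have hcard' : Multiset.card (M.erase δ) ≤ n := by omega
      have hk2' : k ≤ Multiset.card (M.erase δ) := by omega
      have hmem' : ∀ x ∈ M.erase δ, x ∈ R.Φ :=
        fun x hx => hmem x (Multiset.mem_of_le (Multiset.erase_le δ M) hx)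
      have hnv' : ∀ N ≤ M.erase δ, N ≠ 0 → N.sum ≠ 0 :=
        fun N hN h0 => hnv N (le_trans hN (Multiset.erase_le δ M)) h0
      obtain ⟨N, hN1, hN2, hN3, hN4⟩ := IH (M.erase δ) hcard' hmem' (hsum' ▸ hδΦ) hnv'
        α hαM' k hk1 hk2'
      exact ⟨N, le_trans hN1 (Multiset.erase_le δ M), hN2, hN3, hN4⟩

private lemma finset_sum_id_eq (s : Finset V) : s.sum id = s.val.sum := by
  rw [Finset.sum]
  simp

private lemma main_aux [DecidableEq V] (R : RootSys V) (hcr : R.IsCrystallographic) :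
    ∀ n : ℕ, ∀ X : Finset V, X.card ≤ n → ↑X ⊆ R.Φ → X.sum id ∈ R.Φ →
    (∀ Y ⊆ X, Y.Nonempty → Y.sum id ≠ 0) →
    ∀ p : ℕ, 1 ≤ p → p ≤ X.card →
    ∃ S : Finset (Finset V), p ≤ S.card ∧
      ∀ Y ∈ S, Y ⊆ X ∧ Y.card = X.card - p + 1 ∧ Y.sum id ∈ R.Φ := by
  intro n
  induction n with
  | zero => intro X hc _ _ _ p hp1 hp2; omega
  | succ n IH =>
    intro X hcard hX hsum hnv p hp1 hp2
    -- multiset versions of hypotheses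
    have hmemM : ∀ x ∈ X.val, x ∈ R.Φ := fun x hx => hX hx
    have hsumM : X.val.sum ∈ R.Φ := by rwa [finset_sum_id_eq] at hsum
    have hnvM : ∀ N ≤ X.val, N ≠ 0 → N.sum ≠ 0 := by
      intro N hle h0
      have hnd : N.Nodup := Multiset.nodup_of_le hle X.nodup
      have hsub : (⟨N, hnd⟩ : Finset V) ⊆ X := Finset.val_le_iff.mp hle
      have hne : (⟨N, hnd⟩ : Finset V).Nonempty := by
        rw [← Finset.card_pos]
        show 0 < Multiset.card N
        exact Multiset.card_pos.mpr h0
      have := hnv ⟨N, hnd⟩ hsub hne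
      rwa [finset_sum_id_eq] at this
    rcases eq_or_lt_of_le hp1 with hp1' | hp2'
    · -- p = 1
      refine ⟨{X}, by simp [← hp1'], ?_⟩
      intro Y hY
      rw [Finset.mem_singleton] at hY
      subst hY
      refine ⟨le_rfl, by omega, hsum⟩
    · -- p ≥ 2
      have hp2'' : 2 ≤ p := hp2'
      have hX2 : 2 ≤ X.card := le_trans hp2'' hp2
      obtain ⟨α₀, hα₀F⟩ : X.Nonempty := Finset.card_pos.mp (by omega)
      have hα₀ : α₀ ∈ X.val := hα₀F
      obtain ⟨δ, hδe, hδΦ⟩ := key_lemma R hcr (n + 1) X.val hcard hmemM hsumM hnvM hX2 α₀ hα₀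
      have hδX : δ ∈ X := Multiset.mem_of_le (Multiset.erase_le α₀ X.val) hδe
      set X' := X.erase δ with hX'def
      have hX'card : X'.card = X.card - 1 := Finset.card_erase_of_mem hδX
      have hX'sum : X'.sum id = X.sum id - δ := by
        have := Finset.sum_erase_add X id hδX
        rw [← this, id]
        abel
      have hX'Φ : ↑X' ⊆ R.Φ := fun x hx => hX (Finset.mem_of_mem_erase (by exact_mod_cast hx) : _ ∈ X)
      have hX'sumΦ : X'.sum id ∈ R.Φ := by
        rw [hX'sum, finset_sum_id_eq]
        exact hδΦ
      have hX'nv : ∀ Y ⊆ X', Y.Nonempty → Y.sum id ≠ 0 :=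
        fun Y hY hYne => hnv Y (le_trans hY (Finset.erase_subset δ X)) hYne
      have hX'cardn : X'.card ≤ n := by omega
      obtain ⟨S', hS'card, hS'prop⟩ := IH X' hX'cardn hX'Φ hX'sumΦ hX'nv (p - 1)
        (by omega) (by omega)
      -- extra subset through δ
      set k := X.card - p + 1 with hkdef
      obtain ⟨N, hN1, hN2, hN3, hN4⟩ := sub_multiset_lemma R hcr (n + 1) X.val hcard
        hmemM hsumM hnvM δ hδX k (by omega) (by show k ≤ X.card; omega)
      have hnd : N.Nodup := Multiset.nodup_of_le hN1 X.nodup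
      set Z : Finset V := ⟨N, hnd⟩ with hZdef
      have hZsub : Z ⊆ X := Finset.val_le_iff.mp hN1
      have hZcard : Z.card = k := hN3
      have hZsum : Z.sum id ∈ R.Φ := by rwa [finset_sum_id_eq]
      have hδZ : δ ∈ Z := hN2
      have hZnotin : Z ∉ S' := by
        intro hZin
        have := (hS'prop Z hZin).1
        have hδ' : δ ∈ X' := this hδZ
        exact Finset.notMem_erase δ X hδ'
      refine ⟨insert Z S', ?_, ?_⟩
      · rw [Finset.card_insert_of_notMem hZnotin]
        omega
      · intro Y hY
        rcases Finset.mem_insert.mp hY with h | h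
        · subst h
          exact ⟨hZsub, hZcard, hZsum⟩
        · obtain ⟨h1, h2, h3⟩ := hS'prop Y h
          refine ⟨le_trans h1 (Finset.erase_subset δ X), ?_, h3⟩
          rw [h2, hX'card]
          omega

theorem stmt3 (R : RootSys V) (hcr : R.IsCrystallographic)
    (X : Finset V) (hX : ↑X ⊆ R.Φ) (hsum : X.sum id ∈ R.Φ)
    (hnv : ∀ Y ⊆ X, Y.Nonempty → Y.sum id ≠ 0)
    (p : ℕ) (hp1 : 1 ≤ p) (hp2 : p ≤ X.card) :
    ∃ S : Finset (Finset V), p ≤ S.card ∧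
      ∀ Y ∈ S, Y ⊆ X ∧ Y.card = X.card - p + 1 ∧ Y.sum id ∈ R.Φ := by
  classical
  exact main_aux R hcr X.card X le_rfl hX hsum hnv p hp1 hp2
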